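/- arXiv:2509.13052 — 6 statements merged into one kernel-verified Lean document; each statement's English description precedes it below -/
import Mathlib

section
/- With the uniform-mesh L1 weights a_k and the sequence P_j defined by P_0 = 1/a_0 and P_{n-k} = (1/a_0) ∑_{j=k+1}^{n} P_{n-j}(a_{j-(k+1)} - a_{j-k}), one has ∑_{j=1}^{n} P_{n-j} ≤ ω_{1+α}(t_n), where t_n = nρ and ω_{1+α}(t) = t^{α}/Γ(1+α). -/
/-- The kernel function ω_β(t) = t^{β-1}/Γ(β). -/
noncomputable def omegaK (β t : ℝ) : ℝ := t ^ (β - 1) / Real.Gamma β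

/-- The uniform-mesh L1 weights a_k = (ω_{2-α}((k+1)ρ) - ω_{2-α}(kρ))/ρ. -/
noncomputable def l1Weight (α ρ : ℝ) (k : ℕ) : ℝ :=
  (omegaK (2 - α) ((k + 1 : ℕ) * ρ) - omegaK (2 - α) (k * ρ)) / ρ

/-- The sequence P: P_0 = 1/a_0 and
P_{m+1} = (1/a_0) ∑_{i=0}^{m} P_i (a_{m-i} - a_{m+1-i}). -/
noncomputable def Pseq (a : ℕ → ℝ) : ℕ → ℝ
  | 0 => 1 / a 0
  | (m + 1) => (1 / a 0) *
      ∑ i ∈ (Finset.range (m + 1)).attach, Pseq a i.1 * (a (m - i.1) - a (m + 1 - i.1))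
  decreasing_by exact Finset.mem_range.mp i.2


open Real MeasureTheory Finset

lemma Pseq_zero (a : ℕ → ℝ) : Pseq a 0 = 1 / a 0 := by rw [Pseq]

lemma Pseq_succ (a : ℕ → ℝ) (m : ℕ) : Pseq a (m + 1) =
    (1 / a 0) * ∑ i ∈ Finset.range (m + 1), Pseq a i * (a (m - i) - a (m + 1 - i)) := by
  rw [Pseq, Finset.sum_attach (Finset.range (m+1)) (fun i => Pseq a i * (a (m - i) - a (m + 1 - i)))]

lemma l1Weight_eq {α : ℝ} (ρ : ℝ) (hρ : 0 < ρ) (k : ℕ) :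
    l1Weight α ρ k = (((k : ℝ) + 1) ^ (1 - α) - (k : ℝ) ^ (1 - α)) * ρ ^ (-α) / Real.Gamma (2 - α) := by
  have hk : (0:ℝ) ≤ (k:ℝ) := Nat.cast_nonneg k
  have h1 : ((k:ℕ) + 1 : ℕ) * ρ = ((k:ℝ)+1) * ρ := by push_cast; ring
  have e : (2 - α - 1) = 1 - α := by ring
  rw [l1Weight, omegaK, omegaK, e, h1,
    Real.mul_rpow (by linarith) hρ.le, Real.mul_rpow hk hρ.le]
  rw [show (1 - α) = -α + 1 by ring, Real.rpow_add hρ, Real.rpow_one]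
  field_simp

lemma Aw_pos {α : ℝ} (hα1 : α < 1) (k : ℕ) :
    0 < ((k : ℝ) + 1) ^ (1 - α) - (k : ℝ) ^ (1 - α) := by
  have := Real.rpow_lt_rpow (Nat.cast_nonneg k) (by linarith : (k:ℝ) < (k:ℝ)+1) (by linarith : 0 < 1 - α)
  linarith

lemma Aw_anti {α : ℝ} (hα0 : 0 < α) (hα1 : α < 1) (k : ℕ) :
    ((k : ℝ) + 2) ^ (1 - α) - ((k : ℝ) + 1) ^ (1 - α) ≤ ((k : ℝ) + 1) ^ (1 - α) - (k : ℝ) ^ (1 - α) := by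
  have hc := (Real.strictConcaveOn_rpow (by linarith : (0:ℝ) < 1 - α) (by linarith)).concaveOn
  have h := hc.2 (Set.mem_Ici.mpr (Nat.cast_nonneg k))
    (Set.mem_Ici.mpr (by positivity : (0:ℝ) ≤ (k:ℝ) + 2))
    (by norm_num : (0:ℝ) ≤ 1/2) (by norm_num : (0:ℝ) ≤ 1/2) (by norm_num)
  have e : (1/2 : ℝ) • (k:ℝ) + (1/2 : ℝ) • ((k:ℝ)+2) = (k:ℝ)+1 := by
    simp [smul_eq_mul]; ring
  rw [e] at h
  simp only [smul_eq_mul] at h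
  linarith

lemma l1Weight_pos {α : ℝ} (hα0 : 0 < α) (hα1 : α < 1) {ρ : ℝ} (hρ : 0 < ρ) (k : ℕ) :
    0 < l1Weight α ρ k := by
  rw [l1Weight_eq ρ hρ]
  have h1 := Aw_pos hα1 k
  have h2 : (0:ℝ) < ρ ^ (-α) := Real.rpow_pos_of_pos hρ _
  have h3 : 0 < Real.Gamma (2 - α) := Real.Gamma_pos_of_pos (by linarith)
  positivity

lemma l1Weight_anti {α : ℝ} (hα0 : 0 < α) (hα1 : α < 1) {ρ : ℝ} (hρ : 0 < ρ) (k : ℕ) :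
    l1Weight α ρ (k+1) ≤ l1Weight α ρ k := by
  rw [l1Weight_eq ρ hρ, l1Weight_eq ρ hρ]
  have h2 : (0:ℝ) < ρ ^ (-α) := Real.rpow_pos_of_pos hρ _
  have h3 : 0 < Real.Gamma (2 - α) := Real.Gamma_pos_of_pos (by linarith)
  have h := Aw_anti hα0 hα1 k
  push_cast
  gcongr ?_ * ρ ^ (-α) / Real.Gamma (2 - α)
  rw [show ((k:ℝ) + 1 + 1) = (k:ℝ) + 2 by ring]
  exact h


lemma Pseq_nonneg {a : ℕ → ℝ} (ha0 : 0 < a 0) (hdec : ∀ k, a (k+1) ≤ a k) :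
    ∀ m, 0 ≤ Pseq a m := by
  intro m
  induction m using Nat.strong_induction_on with
  | _ m ih =>
    match m with
    | 0 => rw [Pseq_zero]; positivity
    | Nat.succ m =>
      rw [Pseq_succ]
      apply mul_nonneg (by positivity)
      apply Finset.sum_nonneg
      intro i hi
      have him : i ≤ m := Nat.lt_succ_iff.mp (Finset.mem_range.mp hi)
      apply mul_nonneg (ih i (Nat.lt_succ_of_le him))
      have e : m + 1 - i = (m - i) + 1 := by omega
      rw [e]
      linarith [hdec (m - i)]

lemma Pseq_conv {a : ℕ → ℝ} (ha0 : a 0 ≠ 0) :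
    ∀ m, ∑ i ∈ Finset.range (m+1), a (m - i) * Pseq a i = 1 := by
  intro m
  induction m with
  | zero => simp [Pseq_zero]; field_simp
  | succ m ih =>
    rw [Finset.sum_range_succ]
    have h0 : a (m + 1 - (m+1)) * Pseq a (m+1)
        = ∑ i ∈ Finset.range (m+1), Pseq a i * (a (m - i) - a (m + 1 - i)) := by
      rw [Nat.sub_self, Pseq_succ, ← mul_assoc, mul_one_div, div_self ha0, one_mul]
    rw [h0, ← ih, ← Finset.sum_add_distrib]
    apply Finset.sum_congr rfl
    intro i _
    ring

lemma Pseq_conv_rev {a : ℕ → ℝ} (ha0 : a 0 ≠ 0) (m : ℕ) :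
    ∑ i ∈ Finset.range (m+1), a i * Pseq a (m - i) = 1 := by
  rw [← Pseq_conv ha0 m]
  rw [← Finset.sum_range_reflect (fun i => a i * Pseq a (m - i)) (m+1)]
  apply Finset.sum_congr rfl
  intro i hi
  have hi' : i < m + 1 := Finset.mem_range.mp hi
  rw [show m + 1 - 1 - i = m - i by omega, show m - (m - i) = i by omega]

lemma Pseq_conv' {a : ℕ → ℝ} (ha0 : a 0 ≠ 0) {k n : ℕ} (hk1 : 1 ≤ k) (hkn : k ≤ n) :
    ∑ j ∈ Finset.Icc k n, Pseq a (n - j) * a (j - k) = 1 := by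
  have : Finset.Icc k n = Finset.Ico k (n+1) := by rw [Finset.Ico_add_one_right_eq_Icc]
  rw [this, Finset.sum_Ico_eq_sum_range]
  have hm : n + 1 - k = (n - k) + 1 := by omega
  rw [hm, ← Pseq_conv_rev ha0 (n - k)]
  apply Finset.sum_congr rfl
  intro i hi
  have hi' : i < n - k + 1 := Finset.mem_range.mp hi
  rw [mul_comm, show k + i - k = i by omega, show n - (k + i) = n - k - i by omega]

lemma Gamma_le_one {x : ℝ} (h1 : 1 ≤ x) (h2 : x ≤ 2) : Real.Gamma x ≤ 1 := by
  have hc := Real.convexOn_log_Gamma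
  have h := hc.2 (Set.mem_Ioi.mpr one_pos) (Set.mem_Ioi.mpr two_pos)
    (by linarith : (0:ℝ) ≤ 2 - x) (by linarith : (0:ℝ) ≤ x - 1) (by ring)
  have e : (2 - x) • (1:ℝ) + (x - 1) • (2:ℝ) = x := by simp [smul_eq_mul]; ring
  rw [e] at h
  simp only [Function.comp_apply, Real.Gamma_one, Real.Gamma_two, Real.log_one,
    smul_eq_mul, mul_zero, add_zero] at h
  have hx : 0 < Real.Gamma x := Real.Gamma_pos_of_pos (by linarith)
  calc Real.Gamma x = Real.exp (Real.log (Real.Gamma x)) := (Real.exp_log hx).symm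
    _ ≤ Real.exp 0 := Real.exp_le_exp.mpr h
    _ = 1 := Real.exp_zero


lemma chebyshev_integral {a b : ℝ} (hab : a < b) {f g : ℝ → ℝ}
    (hf : IntervalIntegrable f volume a b) (hg : IntervalIntegrable g volume a b)
    (hfg : IntervalIntegrable (fun x => f x * g x) volume a b)
    (hfm : MonotoneOn f (Set.Ioo a b)) (hgm : AntitoneOn g (Set.Ioo a b)) :
    (b - a) * ∫ x in a..b, f x * g x ≤ (∫ x in a..b, f x) * ∫ x in a..b, g x := by
  set μ := volume.restrict (Set.Ioo a b) with hμ
  have hres : μ = volume.restrict (Set.Ioc a b) :=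
    Measure.restrict_congr_set Ioo_ae_eq_Ioc
  haveI : IsFiniteMeasure μ := by
    constructor
    rw [hμ, Measure.restrict_apply_univ, Real.volume_Ioo]
    exact ENNReal.ofReal_lt_top
  haveI : SFinite μ := inferInstanceAs (SFinite (volume.restrict (Set.Ioo a b)))
  have If : Integrable f μ := by rw [hres]; exact hf.1
  have Ig : Integrable g μ := by rw [hres]; exact hg.1
  have Ifg : Integrable (fun x => f x * g x) μ := by rw [hres]; exact hfg.1
  have e1 : Integrable (fun z : ℝ × ℝ => f z.1 * g z.2) (μ.prod μ) := If.mul_prod Ig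
  have e4 : Integrable (fun z : ℝ × ℝ => f z.2 * g z.1) (μ.prod μ) := by
    have := Ig.mul_prod If
    exact this.congr (Filter.Eventually.of_forall (fun z => mul_comm _ _))
  have hone1 : Integrable (fun _ : ℝ => (1:ℝ)) μ := integrable_const 1
  have e2 : Integrable (fun z : ℝ × ℝ => f z.1 * g z.1) (μ.prod μ) := by
    have := Ifg.mul_prod hone1
    simpa using this
  have e3 : Integrable (fun z : ℝ × ℝ => f z.2 * g z.2) (μ.prod μ) := by
    have := hone1.mul_prod Ifg
    simpa using this
  have key : 0 ≤ ∫ z : ℝ × ℝ, (f z.1 - f z.2) * (g z.2 - g z.1) ∂(μ.prod μ) := by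
    apply integral_nonneg_of_ae
    have hmem : ∀ᵐ z ∂(μ.prod μ), z ∈ (Set.Ioo a b) ×ˢ (Set.Ioo a b) := by
      rw [hμ, Measure.prod_restrict]
      exact ae_restrict_mem (measurableSet_Ioo.prod measurableSet_Ioo)
    filter_upwards [hmem] with z hz
    simp only [Pi.zero_apply]
    obtain ⟨h1, h2⟩ := hz
    rcases le_total z.1 z.2 with h | h
    · have hf' := hfm h1 h2 h
      have hg' := hgm h1 h2 h
      nlinarith
    · have hf' := hfm h2 h1 h
      have hg' := hgm h2 h1 h
      nlinarith
  have hexp : (fun z : ℝ × ℝ => (f z.1 - f z.2) * (g z.2 - g z.1))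
      = fun z => (f z.1 * g z.2 + f z.2 * g z.1) - (f z.1 * g z.1 + f z.2 * g z.2) := by
    funext z; ring
  have i12 : Integrable (fun z : ℝ × ℝ => f z.1 * g z.2 + f z.2 * g z.1) (μ.prod μ) := e1.add e4
  have i34 : Integrable (fun z : ℝ × ℝ => f z.1 * g z.1 + f z.2 * g z.2) (μ.prod μ) := e2.add e3
  rw [hexp, integral_sub i12 i34, integral_add e1 e4, integral_add e2 e3] at key
  have v1 : ∫ z : ℝ × ℝ, f z.1 * g z.2 ∂(μ.prod μ) = (∫ x, f x ∂μ) * ∫ x, g x ∂μ :=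
    integral_prod_mul f g
  have v4 : ∫ z : ℝ × ℝ, f z.2 * g z.1 ∂(μ.prod μ) = (∫ x, g x ∂μ) * ∫ x, f x ∂μ := by
    rw [show (fun z : ℝ × ℝ => f z.2 * g z.1) = fun z : ℝ × ℝ => g z.1 * f z.2 by
      funext z; ring]
    exact integral_prod_mul g f
  have hone : ∫ _x, (1:ℝ) ∂μ = b - a := by
    simp [hμ, Real.volume_Ioo, ENNReal.toReal_ofReal (by linarith : (0:ℝ) ≤ b - a), hab.le]
  have v2 : ∫ z : ℝ × ℝ, f z.1 * g z.1 ∂(μ.prod μ) = (∫ x, f x * g x ∂μ) * (b - a) := by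
    have := integral_prod_mul (μ := μ) (ν := μ) (fun x => f x * g x) (fun _ => (1:ℝ))
    simpa [hone] using this
  have v3 : ∫ z : ℝ × ℝ, f z.2 * g z.2 ∂(μ.prod μ) = (b - a) * ∫ x, f x * g x ∂μ := by
    have := integral_prod_mul (μ := μ) (ν := μ) (fun _ => (1:ℝ)) (fun x => f x * g x)
    simpa [hone] using this
  rw [v1, v2, v3, v4] at key
  have mf : ∫ x in a..b, f x = ∫ x, f x ∂μ := by
    rw [intervalIntegral.integral_of_le hab.le, hres]
  have mg : ∫ x in a..b, g x = ∫ x, g x ∂μ := by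
    rw [intervalIntegral.integral_of_le hab.le, hres]
  have mfg : ∫ x in a..b, f x * g x = ∫ x, f x * g x ∂μ := by
    rw [intervalIntegral.integral_of_le hab.le, hres]
  rw [mf, mg, mfg]
  nlinarith [key]


lemma beta_eval {α : ℝ} (hα0 : 0 < α) (hα1 : α < 1) :
    ∫ u in (0:ℝ)..1, u ^ (α - 1) * (1 - u) ^ (-α) = Real.Gamma α * Real.Gamma (1 - α) := by
  have h1 : Complex.Gamma α * Complex.Gamma (1 - α)
      = Complex.Gamma ((α : ℂ) + (1 - α)) * Complex.betaIntegral α (1 - α) := by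
    apply Complex.Gamma_mul_Gamma_eq_betaIntegral
    · simpa using hα0
    · simp only [Complex.sub_re, Complex.one_re, Complex.ofReal_re]; linarith
  have h2 : (α : ℂ) + (1 - α) = 1 := by ring
  rw [h2, Complex.Gamma_one, one_mul] at h1
  have h3 : Complex.betaIntegral α (1 - α)
      = ∫ u in (0:ℝ)..1, ((u ^ (α - 1) * (1 - u) ^ (-α) : ℝ) : ℂ) := by
    rw [Complex.betaIntegral]
    apply intervalIntegral.integral_congr
    intro x hx
    rw [Set.uIcc_of_le (by norm_num : (0:ℝ) ≤ 1)] at hx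
    obtain ⟨hx0, hx1⟩ := hx
    push_cast
    rw [Complex.ofReal_cpow hx0, Complex.ofReal_cpow (by linarith : (0:ℝ) ≤ 1 - x)]
    push_cast
    rw [show (1 - (α:ℂ) - 1) = -α by ring]
  rw [h3, intervalIntegral.integral_ofReal] at h1
  have h4 : ((Real.Gamma α * Real.Gamma (1 - α) : ℝ) : ℂ)
      = ((∫ u in (0:ℝ)..1, u ^ (α - 1) * (1 - u) ^ (-α) : ℝ) : ℂ) := by
    rw [← h1]
    push_cast
    rw [← Complex.Gamma_ofReal, ← Complex.Gamma_ofReal]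
    push_cast
    ring
  exact_mod_cast h4.symm

lemma beta_eval_T {α : ℝ} (hα0 : 0 < α) (hα1 : α < 1) {T : ℝ} (hT : 0 < T) :
    ∫ s in (0:ℝ)..T, (T - s) ^ (-α) * s ^ (α - 1) = Real.Gamma α * Real.Gamma (1 - α) := by
  have hsub := intervalIntegral.integral_comp_mul_left
    (fun s => (T - s) ^ (-α) * s ^ (α - 1)) (ne_of_gt hT) (a := 0) (b := 1)
  simp only [mul_zero, mul_one] at hsub
  have hcong : ∫ u in (0:ℝ)..1, (T - T * u) ^ (-α) * (T * u) ^ (α - 1)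
      = ∫ u in (0:ℝ)..1, T⁻¹ * (u ^ (α - 1) * (1 - u) ^ (-α)) := by
    apply intervalIntegral.integral_congr
    intro u hu
    rw [Set.uIcc_of_le (by norm_num : (0:ℝ) ≤ 1)] at hu
    obtain ⟨hu0, hu1⟩ := hu
    show (T - T * u) ^ (-α) * (T * u) ^ (α - 1) = T⁻¹ * (u ^ (α - 1) * (1 - u) ^ (-α))
    have e1 : T - T * u = T * (1 - u) := by ring
    rw [e1, Real.mul_rpow hT.le (by linarith), Real.mul_rpow hT.le hu0]
    have e2 : T ^ (-α) * (1 - u) ^ (-α) * (T ^ (α - 1) * u ^ (α - 1))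
        = (T ^ (-α) * T ^ (α - 1)) * ((1 - u) ^ (-α) * u ^ (α - 1)) := by ring
    rw [e2, ← Real.rpow_add hT]
    rw [show -α + (α - 1) = -1 by ring, Real.rpow_neg_one]
    ring
  rw [hcong, intervalIntegral.integral_const_mul, beta_eval hα0 hα1] at hsub
  rw [smul_eq_mul] at hsub
  exact (mul_left_cancel₀ (inv_ne_zero (ne_of_gt hT)) hsub).symm


lemma intG {α : ℝ} (hα0 : 0 < α) (c d : ℝ) :
    IntervalIntegrable (fun s : ℝ => s ^ (α - 1)) volume c d :=
  intervalIntegral.intervalIntegrable_rpow' (by linarith)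

lemma intF {α : ℝ} (hα1 : α < 1) (T c d : ℝ) :
    IntervalIntegrable (fun s : ℝ => (T - s) ^ (-α)) volume c d := by
  have h := intervalIntegral.intervalIntegrable_rpow' (r := -α) (by linarith)
    (a := T - c) (b := T - d)
  have h2 := h.comp_sub_left T
  simpa using h2

lemma intG_val {α : ℝ} (hα0 : 0 < α) (c d : ℝ) :
    ∫ s in c..d, s ^ (α - 1) = (d ^ α - c ^ α) / α := by
  rw [integral_rpow (Or.inl (by linarith))]
  norm_num

lemma intF_val {α : ℝ} (hα0 : 0 < α) (hα1 : α < 1) (T c d : ℝ) :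
    ∫ s in c..d, (T - s) ^ (-α) = ((T - c) ^ (1 - α) - (T - d) ^ (1 - α)) / (1 - α) := by
  rw [intervalIntegral.integral_comp_sub_left (fun u => u ^ (-α)) T]
  rw [integral_rpow (Or.inl (by linarith))]
  rw [show -α + 1 = 1 - α by ring]


lemma omega1p {α : ℝ} (x : ℝ) : omegaK (1 + α) x = x ^ α / Real.Gamma (1 + α) := by
  rw [omegaK, show 1 + α - 1 = α by ring]

lemma key_ineq {α ρ : ℝ} (hα0 : 0 < α) (hα1 : α < 1) (hρ : 0 < ρ) {j : ℕ} (hj : 1 ≤ j) :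
    1 ≤ ∑ k ∈ Finset.Icc 1 j, l1Weight α ρ (j - k) *
      (omegaK (1 + α) ((k : ℝ) * ρ) - omegaK (1 + α) (((k - 1 : ℕ) : ℝ) * ρ)) := by
  have gα : 0 < Real.Gamma α := Real.Gamma_pos_of_pos hα0
  have g1a : 0 < Real.Gamma (1 - α) := Real.Gamma_pos_of_pos (by linarith)
  have g2a : 0 < Real.Gamma (2 - α) := Real.Gamma_pos_of_pos (by linarith)
  have g1p : 0 < Real.Gamma (1 + α) := Real.Gamma_pos_of_pos (by linarith)
  rcases eq_or_lt_of_le hj with hj1 | hj2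
  · -- case j = 1
    rw [← hj1, Finset.Icc_self, Finset.sum_singleton]
    norm_num
    rw [l1Weight_eq ρ hρ 0, omega1p, omega1p]
    norm_num
    rw [Real.zero_rpow (ne_of_gt hα0), Real.zero_rpow (show (1:ℝ) - α ≠ 0 by linarith),
      Real.rpow_neg hρ.le]
    have hρα : 0 < ρ ^ α := Real.rpow_pos_of_pos hρ α
    rw [show ((1:ℝ) - 0) * (ρ ^ α)⁻¹ / Real.Gamma (2 - α) * (ρ ^ α / Real.Gamma (1 + α) - 0 / Real.Gamma (1 + α))
        = (ρ ^ α * (ρ ^ α)⁻¹) / (Real.Gamma (2 - α) * Real.Gamma (1 + α)) by field_simp; ring]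
    rw [mul_inv_cancel₀ (ne_of_gt hρα)]
    rw [le_div_iff₀ (by positivity)]
    have hle1 : Real.Gamma (2 - α) ≤ 1 := Gamma_le_one (by linarith) (by linarith)
    have hle2 : Real.Gamma (1 + α) ≤ 1 := Gamma_le_one (by linarith) (by linarith)
    nlinarith
  · -- case j ≥ 2
    have hj2' : 2 ≤ j := hj2
    set T : ℝ := (j : ℝ) * ρ with hTdef
    have hT : 0 < T := by
      have : (1:ℝ) ≤ (j:ℝ) := by exact_mod_cast hj
      positivity
    -- integrability of the product on each piece
    have hfgint : ∀ k : ℕ, 1 ≤ k → k ≤ j →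
        IntervalIntegrable (fun s : ℝ => (T - s) ^ (-α) * s ^ (α - 1)) volume
          (((k - 1 : ℕ) : ℝ) * ρ) ((k : ℝ) * ρ) := by
      intro k hk1 hkj
      have hc : ((k - 1 : ℕ) : ℝ) = (k : ℝ) - 1 := by
        rw [Nat.cast_sub hk1, Nat.cast_one]
      have hcd : ((k - 1 : ℕ) : ℝ) * ρ ≤ (k : ℝ) * ρ := by
        rw [hc]; nlinarith [hρ]
      rcases lt_or_eq_of_le hkj with hlt | heq
      · -- k < j : F is continuous on the interval
        have hFcont : ContinuousOn (fun s : ℝ => (T - s) ^ (-α))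
            (Set.uIcc (((k - 1 : ℕ) : ℝ) * ρ) ((k : ℝ) * ρ)) := by
          apply ContinuousOn.rpow_const
          · exact (continuous_const.sub continuous_id).continuousOn
          · intro x hx
            rw [Set.uIcc_of_le hcd] at hx
            have hxd : x ≤ (k : ℝ) * ρ := hx.2
            have hkj' : (k : ℝ) + 1 ≤ (j : ℝ) := by exact_mod_cast hlt
            have : 0 < T - x := by rw [hTdef]; nlinarith
            exact Or.inl (ne_of_gt this)
        exact (intG hα0 _ _).continuousOn_mul hFcont
      · -- k = j ≥ 2 : G is continuous on the interval
        have hk2 : 2 ≤ k := by omega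
        have hGcont : ContinuousOn (fun s : ℝ => s ^ (α - 1))
            (Set.uIcc (((k - 1 : ℕ) : ℝ) * ρ) ((k : ℝ) * ρ)) := by
          apply ContinuousOn.rpow_const
          · exact continuous_id.continuousOn
          · intro x hx
            rw [Set.uIcc_of_le hcd] at hx
            have hk2' : (2:ℝ) ≤ (k : ℝ) := by exact_mod_cast hk2
            have : 0 < x := by
              have := hx.1; rw [hc] at this; nlinarith
            exact Or.inl (ne_of_gt this)
        exact (intF hα1 T _ _).mul_continuousOn hGcont
    -- value of the F-integral: the L1 weight
    have claim1 : ∀ k : ℕ, 1 ≤ k → k ≤ j →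
        ∫ s in (((k - 1 : ℕ) : ℝ) * ρ)..((k : ℝ) * ρ), (T - s) ^ (-α)
          = l1Weight α ρ (j - k) * (ρ * Real.Gamma (1 - α)) := by
      intro k hk1 hkj
      have hc : ((k - 1 : ℕ) : ℝ) = (k : ℝ) - 1 := by
        rw [Nat.cast_sub hk1, Nat.cast_one]
      have hjk : ((j - k : ℕ) : ℝ) = (j : ℝ) - (k : ℝ) := by
        rw [Nat.cast_sub hkj]
      rw [intF_val hα0 hα1]
      have e1 : T - ((k - 1 : ℕ) : ℝ) * ρ = (((j - k : ℕ) : ℝ) + 1) * ρ := by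
        rw [hTdef, hc, hjk]; ring
      have e2 : T - (k : ℝ) * ρ = ((j - k : ℕ) : ℝ) * ρ := by
        rw [hTdef, hjk]; ring
      have hX : (0:ℝ) ≤ ((j - k : ℕ) : ℝ) := Nat.cast_nonneg _
      rw [e1, e2, l1Weight_eq ρ hρ]
      rw [Real.mul_rpow (by linarith) hρ.le, Real.mul_rpow hX hρ.le]
      set u : ℝ := 1 - α with hu
      have hu0 : (0:ℝ) < u := by rw [hu]; linarith
      have hG : (0:ℝ) < Real.Gamma u := Real.Gamma_pos_of_pos hu0
      rw [show (2:ℝ) - α = u + 1 by rw [hu]; ring, Real.Gamma_add_one (ne_of_gt hu0)]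
      have hρu : ρ ^ (-α) * ρ = ρ ^ u := by
        rw [hu, show (1:ℝ) - α = -α + 1 by ring, Real.rpow_add hρ, Real.rpow_one]
      rw [← hρu]
      field_simp
    -- value of the G-integral
    have claim2 : ∀ k : ℕ, 1 ≤ k →
        ∫ s in (((k - 1 : ℕ) : ℝ) * ρ)..((k : ℝ) * ρ), s ^ (α - 1)
          = (omegaK (1 + α) ((k : ℝ) * ρ) - omegaK (1 + α) (((k - 1 : ℕ) : ℝ) * ρ)) * Real.Gamma α := by
      intro k hk1
      rw [intG_val hα0, omega1p, omega1p]
      rw [show (1:ℝ) + α = α + 1 by ring, Real.Gamma_add_one (ne_of_gt hα0)]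
      field_simp
    -- Chebyshev on each piece
    have chev : ∀ k : ℕ, 1 ≤ k → k ≤ j →
        ρ * ∫ s in (((k - 1 : ℕ) : ℝ) * ρ)..((k : ℝ) * ρ), (T - s) ^ (-α) * s ^ (α - 1)
          ≤ (∫ s in (((k - 1 : ℕ) : ℝ) * ρ)..((k : ℝ) * ρ), (T - s) ^ (-α))
            * ∫ s in (((k - 1 : ℕ) : ℝ) * ρ)..((k : ℝ) * ρ), s ^ (α - 1) := by
      intro k hk1 hkj
      have hc : ((k - 1 : ℕ) : ℝ) = (k : ℝ) - 1 := by
        rw [Nat.cast_sub hk1, Nat.cast_one]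
      have hab : ((k - 1 : ℕ) : ℝ) * ρ < (k : ℝ) * ρ := by
        rw [hc]; nlinarith [hρ]
      have hkj' : (k : ℝ) ≤ (j : ℝ) := by exact_mod_cast hkj
      have hmono : MonotoneOn (fun s : ℝ => (T - s) ^ (-α))
          (Set.Ioo (((k - 1 : ℕ) : ℝ) * ρ) ((k : ℝ) * ρ)) := by
        intro x hx y hy hxy
        have hyT : y < T := by
          have := hy.2; rw [hTdef]; nlinarith
        exact Real.rpow_le_rpow_of_nonpos (by linarith) (by linarith) (by linarith)
      have hanti : AntitoneOn (fun s : ℝ => s ^ (α - 1))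
          (Set.Ioo (((k - 1 : ℕ) : ℝ) * ρ) ((k : ℝ) * ρ)) := by
        intro x hx y hy hxy
        have hx0 : 0 < x := by
          have h1 := hx.1
          have h2 : (0:ℝ) ≤ ((k - 1 : ℕ) : ℝ) * ρ := by positivity
          linarith
        exact Real.rpow_le_rpow_of_nonpos hx0 hxy (by linarith)
      have h := chebyshev_integral hab (intF hα1 T _ _) (intG hα0 _ _)
        (hfgint k hk1 hkj) hmono hanti
      have hsub : (k : ℝ) * ρ - ((k - 1 : ℕ) : ℝ) * ρ = ρ := by rw [hc]; ring
      rw [hsub] at h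
      exact h
    -- splitting the full integral
    have split : ∑ k ∈ Finset.Icc 1 j,
        (∫ s in (((k - 1 : ℕ) : ℝ) * ρ)..((k : ℝ) * ρ), (T - s) ^ (-α) * s ^ (α - 1))
          = ∫ s in (0:ℝ)..T, (T - s) ^ (-α) * s ^ (α - 1) := by
      have adj := intervalIntegral.sum_integral_adjacent_intervals
        (f := fun s : ℝ => (T - s) ^ (-α) * s ^ (α - 1)) (μ := volume)
        (a := fun i : ℕ => (i : ℝ) * ρ) (n := j) (fun i hi => by
          have h := hfgint (i + 1) (by omega) (by omega)
          have b1 : ((i + 1 - 1 : ℕ) : ℝ) = (i : ℝ) := by norm_num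
          rw [b1] at h
          exact_mod_cast h)
      rw [show Finset.Icc 1 j = Finset.Ico 1 (j + 1) from (Finset.Ico_add_one_right_eq_Icc 1 j),
        Finset.sum_Ico_eq_sum_range]
      rw [show j + 1 - 1 = j by omega]
      have e1 : ∀ i ∈ Finset.range j,
          (∫ s in (((1 + i - 1 : ℕ) : ℝ) * ρ)..(((1 + i : ℕ) : ℝ) * ρ),
            (T - s) ^ (-α) * s ^ (α - 1))
          = ∫ s in ((i : ℝ) * ρ)..(((i + 1 : ℕ) : ℝ) * ρ), (T - s) ^ (-α) * s ^ (α - 1) := by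
        intro i _
        have b1 : ((1 + i - 1 : ℕ) : ℝ) = (i : ℝ) := by norm_num
        have b2 : ((1 + i : ℕ) : ℝ) = ((i + 1 : ℕ) : ℝ) := by push_cast; ring
        rw [b1, b2]
      rw [Finset.sum_congr rfl e1]
      rw [adj]
      norm_num
      rfl
    have hbeta := beta_eval_T hα0 hα1 hT
    calc (1:ℝ)
        = (∫ s in (0:ℝ)..T, (T - s) ^ (-α) * s ^ (α - 1)) / (Real.Gamma α * Real.Gamma (1 - α)) := by
          rw [hbeta]; field_simp
      _ = ∑ k ∈ Finset.Icc 1 j,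
            (∫ s in (((k - 1 : ℕ) : ℝ) * ρ)..((k : ℝ) * ρ), (T - s) ^ (-α) * s ^ (α - 1))
              / (Real.Gamma α * Real.Gamma (1 - α)) := by
          rw [← split, Finset.sum_div]
      _ ≤ ∑ k ∈ Finset.Icc 1 j, l1Weight α ρ (j - k) *
            (omegaK (1 + α) ((k : ℝ) * ρ) - omegaK (1 + α) (((k - 1 : ℕ) : ℝ) * ρ)) := by
          apply Finset.sum_le_sum
          intro k hk
          obtain ⟨hk1, hkj⟩ := Finset.mem_Icc.mp hk
          have h1 := claim1 k hk1 hkj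
          have h2 := claim2 k hk1
          have h3 := chev k hk1 hkj
          set IFG := ∫ s in (((k - 1 : ℕ) : ℝ) * ρ)..((k : ℝ) * ρ), (T - s) ^ (-α) * s ^ (α - 1)
          set IF := ∫ s in (((k - 1 : ℕ) : ℝ) * ρ)..((k : ℝ) * ρ), (T - s) ^ (-α)
          set IG := ∫ s in (((k - 1 : ℕ) : ℝ) * ρ)..((k : ℝ) * ρ), s ^ (α - 1)
          have hW : l1Weight α ρ (j - k) = IF / (ρ * Real.Gamma (1 - α)) := by
            rw [h1]; field_simp
          have hO : omegaK (1 + α) ((k : ℝ) * ρ) - omegaK (1 + α) (((k - 1 : ℕ) : ℝ) * ρ)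
              = IG / Real.Gamma α := by
            rw [h2]; field_simp
          rw [hW, hO, div_mul_div_comm, div_le_div_iff₀ (by positivity) (by positivity)]
          have h4 := mul_le_mul_of_nonneg_right h3 (mul_pos g1a gα).le
          nlinarith [h4]


/-- With the uniform-mesh L1 weights and the sequence P_j as above,
∑_{j=1}^{n} P_{n-j} ≤ ω_{1+α}(t_n) with t_n = nρ. -/
theorem Pseq_sum_le_omega (α ρ : ℝ) (hα0 : 0 < α) (hα1 : α < 1) (hρ : 0 < ρ) (n : ℕ) :
    ∑ j ∈ Finset.Icc 1 n, Pseq (l1Weight α ρ) (n - j) ≤ omegaK (1 + α) (n * ρ) := by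
  rcases Nat.eq_zero_or_pos n with hn0 | hn1
  · subst hn0
    simp only [Nat.cast_zero, zero_mul, omega1p, Finset.Icc_self]
    rw [Real.zero_rpow (ne_of_gt hα0)]
    simp
  · set a := l1Weight α ρ with ha
    have ha0 : 0 < a 0 := l1Weight_pos hα0 hα1 hρ 0
    have hdec : ∀ k, a (k + 1) ≤ a k := fun k => l1Weight_anti hα0 hα1 hρ k
    have hP : ∀ m, 0 ≤ Pseq a m := Pseq_nonneg ha0 hdec
    have hgoal : ∑ j ∈ Finset.Icc 1 n, Pseq a (n - j) ≤ omegaK (1 + α) ((n : ℝ) * ρ) := by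
      calc ∑ j ∈ Finset.Icc 1 n, Pseq a (n - j)
          ≤ ∑ j ∈ Finset.Icc 1 n, Pseq a (n - j) * (∑ k ∈ Finset.Icc 1 j, a (j - k) *
              (omegaK (1 + α) ((k : ℝ) * ρ) - omegaK (1 + α) (((k - 1 : ℕ) : ℝ) * ρ))) := by
            apply Finset.sum_le_sum
            intro j hj
            obtain ⟨hj1, hjn⟩ := Finset.mem_Icc.mp hj
            have hkey := key_ineq hα0 hα1 hρ hj1
            exact le_mul_of_one_le_right (hP _) hkey
        _ = ∑ j ∈ Finset.Icc 1 n, ∑ k ∈ Finset.Icc 1 j, Pseq a (n - j) * a (j - k) *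
              (omegaK (1 + α) ((k : ℝ) * ρ) - omegaK (1 + α) (((k - 1 : ℕ) : ℝ) * ρ)) := by
            apply Finset.sum_congr rfl
            intro j _
            rw [Finset.mul_sum]
            apply Finset.sum_congr rfl
            intro k _; ring
        _ = ∑ k ∈ Finset.Icc 1 n, ∑ j ∈ Finset.Icc k n, Pseq a (n - j) * a (j - k) *
              (omegaK (1 + α) ((k : ℝ) * ρ) - omegaK (1 + α) (((k - 1 : ℕ) : ℝ) * ρ)) := by
            simp only [← Finset.Ico_add_one_right_eq_Icc]
            exact (Finset.sum_Ico_Ico_comm 1 (n + 1) (fun k j => Pseq a (n - j) * a (j - k) *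
              (omegaK (1 + α) ((k : ℝ) * ρ) - omegaK (1 + α) (((k - 1 : ℕ) : ℝ) * ρ)))).symm
        _ = ∑ k ∈ Finset.Icc 1 n,
              (omegaK (1 + α) ((k : ℝ) * ρ) - omegaK (1 + α) (((k - 1 : ℕ) : ℝ) * ρ)) *
              ∑ j ∈ Finset.Icc k n, Pseq a (n - j) * a (j - k) := by
            apply Finset.sum_congr rfl
            intro k _
            rw [Finset.mul_sum]
            apply Finset.sum_congr rfl
            intro j _; ring
        _ = ∑ k ∈ Finset.Icc 1 n,
              (omegaK (1 + α) ((k : ℝ) * ρ) - omegaK (1 + α) (((k - 1 : ℕ) : ℝ) * ρ)) := by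
            apply Finset.sum_congr rfl
            intro k hk
            obtain ⟨hk1, hkn⟩ := Finset.mem_Icc.mp hk
            rw [Pseq_conv' (ne_of_gt ha0) hk1 hkn, mul_one]
        _ = omegaK (1 + α) ((n : ℝ) * ρ) := by
            rw [show Finset.Icc 1 n = Finset.Ico 1 (n + 1) from (Finset.Ico_add_one_right_eq_Icc 1 n),
              Finset.sum_Ico_eq_sum_range]
            rw [show n + 1 - 1 = n by omega]
            have e1 : ∀ i ∈ Finset.range n,
                (omegaK (1 + α) (((1 + i : ℕ) : ℝ) * ρ)
                  - omegaK (1 + α) (((1 + i - 1 : ℕ) : ℝ) * ρ))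
                = (fun m : ℕ => omegaK (1 + α) ((m : ℝ) * ρ)) (i + 1)
                  - (fun m : ℕ => omegaK (1 + α) ((m : ℝ) * ρ)) i := by
              intro i _
              have b1 : ((1 + i - 1 : ℕ) : ℝ) = (i : ℝ) := by norm_num
              have b2 : ((1 + i : ℕ) : ℝ) = ((i + 1 : ℕ) : ℝ) := by push_cast; ring
              rw [b1, b2]
            rw [Finset.sum_congr rfl e1, Finset.sum_range_sub
              (fun m : ℕ => omegaK (1 + α) ((m : ℝ) * ρ)) n]
            norm_num [omega1p, Real.zero_rpow (ne_of_gt hα0)]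
    exact hgoal
end

section
/- Let H be the n×n block matrix H = |b|ρ [[O, U],[O, O]] where U is the (n-2N)×(n-2N) upper triangular matrix of all ones on and above the diagonal, with 2(i-1)N ≤ n ≤ 2iN. Then H^q = 0 for every integer q ≥ i. -/
/-- The delay matrix H = |b|ρ [[O_{(n-2N)×2N}, U],[O, O]], where U is the
(n-2N)×(n-2N) upper triangular matrix of all ones on and above the diagonal:
rows j < n-2N, columns k with 2N ≤ k, and entry one iff j ≤ k - 2N. -/
noncomputable def delayMatrix (b ρ : ℝ) (n N : ℕ) : Matrix (Fin n) (Fin n) ℝ :=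
  fun j k =>
    if j.val < n - 2 * N ∧ 2 * N ≤ k.val ∧ j.val ≤ k.val - 2 * N then |b| * ρ else 0

/-- H^q = 0 for every integer q ≥ i, when 2(i-1)N ≤ n ≤ 2iN. -/
theorem delayMatrix_pow_eq_zero (b ρ : ℝ) (hb : b ≠ 0) (hρ : 0 < ρ)
    (n N i : ℕ) (hN : 2 ≤ N) (hi : 1 ≤ i)
    (hn1 : 2 * (i - 1) * N ≤ n) (hn2 : n ≤ 2 * i * N)
    (hn3 : 2 ≤ i → 2 * N < n) :
    ∀ q : ℕ, i ≤ q → (delayMatrix b ρ n N) ^ q = 0 := by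
  have key : ∀ q : ℕ, ∀ j k : Fin n, ((delayMatrix b ρ n N) ^ q) j k ≠ 0 →
      j.val + 2 * N * q ≤ k.val := by
    intro q
    induction q with
    | zero =>
      intro j k h
      simp only [pow_zero, Matrix.one_apply, ne_eq, ite_eq_right_iff, not_forall] at h
      simp [h.1]
    | succ q ih =>
      intro j k h
      rw [pow_succ, Matrix.mul_apply] at h
      obtain ⟨m, hm⟩ := Finset.exists_ne_zero_of_sum_ne_zero h
      have h1 := ih j m (fun h' => hm.2 (by rw [h', zero_mul]))
      have h2 : (delayMatrix b ρ n N) m k ≠ 0 := fun h' => hm.2 (by rw [h', mul_zero])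
      unfold delayMatrix at h2
      rw [ne_eq, ite_eq_right_iff, not_forall] at h2
      obtain ⟨⟨_, hk2N, hmk⟩, _⟩ := h2
      have : 2 * N * (q + 1) = 2 * N * q + 2 * N := by ring
      omega
  intro q hq
  ext j k
  simp only [Matrix.zero_apply]
  by_contra h
  have := key q j k h
  have hk := k.isLt
  have : 2 * i * N ≤ 2 * N * q := by nlinarith
  omega
end

section
/- Let A = (1,1,...,1)^T ∈ R^n and H the nilpotent delay matrix as above with |b|ρ(n-2N) ≤ C. For 1 ≤ q ≤ i-1, write H^q A = (E^{(q)}_{n-2qN}, E^{(q)}_{n-2qN-1}, ..., E^{(q)}_1, 0, ..., 0)^T. Then the entries satisfy E^{(q)}_{n-2qN} > E^{(q)}_j > 0 for all 1 ≤ j ≤ n-2qN-1, and E^{(q)}_{n-2qN} ≤ C^q. -/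
/-- For A = (1,...,1)^T and 1 ≤ q ≤ i-1, writing
H^q A = (E^{(q)}_{n-2qN}, ..., E^{(q)}_1, 0, ..., 0)^T (so that E^{(q)}_{n-2qN} is the
first component and E^{(q)}_j sits at position n-2qN-j), the entries satisfy
E^{(q)}_{n-2qN} > E^{(q)}_j > 0 for 1 ≤ j ≤ n-2qN-1, and E^{(q)}_{n-2qN} ≤ C^q
whenever |b|ρ(n-2N) ≤ C. -/
theorem delayMatrix_pow_mulVec_one (b ρ : ℝ) (hb : b ≠ 0) (hρ : 0 < ρ)
    (n N i : ℕ) (hN : 2 ≤ N) (hi : 2 ≤ i)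
    (hn1 : 2 * (i - 1) * N ≤ n) (hn2 : n ≤ 2 * i * N) (hn0 : 0 < n)
    (C : ℝ) (hC : |b| * ρ * ((n - 2 * N : ℕ) : ℝ) ≤ C)
    (q : ℕ) (hq1 : 1 ≤ q) (hq2 : q ≤ i - 1) :
    (∀ m : Fin n, 1 ≤ m.val → m.val ≤ n - 2 * q * N - 1 →
      (((delayMatrix b ρ n N) ^ q).mulVec (fun _ => 1) ⟨0, hn0⟩ >
        ((delayMatrix b ρ n N) ^ q).mulVec (fun _ => 1) m ∧
       ((delayMatrix b ρ n N) ^ q).mulVec (fun _ => 1) m > 0)) ∧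
    ((delayMatrix b ρ n N) ^ q).mulVec (fun _ => 1) ⟨0, hn0⟩ ≤ C ^ q := by
  have hc0 : (0:ℝ) < |b| * ρ := mul_pos (abs_pos.mpr hb) hρ
  have hC0 : (0:ℝ) ≤ C := le_trans (by positivity) hC
  set c : ℝ := |b| * ρ with hc
  set H := delayMatrix b ρ n N with hH
  have g : ℕ → Fin n → ℝ := fun q => (H ^ q).mulVec (fun _ => 1)
  have hrow : ∀ (w : Fin n → ℝ) (j : Fin n), H.mulVec w j =
      if j.val < n - 2 * N then
        c * ∑ k ∈ Finset.univ.filter (fun k : Fin n => j.val + 2 * N ≤ k.val), w k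
      else 0 := by
    intro w j
    rw [Matrix.mulVec, dotProduct]
    by_cases hj : j.val < n - 2 * N
    · simp only [hj, if_true]
      rw [Finset.mul_sum, Finset.sum_filter]
      apply Finset.sum_congr rfl
      intro k _
      have : (j.val < n - 2 * N ∧ 2 * N ≤ k.val ∧ j.val ≤ k.val - 2 * N) ↔
          (j.val + 2 * N ≤ k.val) := by
        constructor
        · rintro ⟨_, h1, h2⟩; omega
        · intro h; exact ⟨hj, by omega, by omega⟩
      simp only [hH, delayMatrix, this]
      by_cases hk : j.val + 2 * N ≤ k.val <;> simp [hk, hc]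
    · simp only [hj, if_false]
      apply Finset.sum_eq_zero
      intro k _
      simp only [hH, delayMatrix]
      rw [if_neg (by tauto), zero_mul]
  have key : ∀ q : ℕ,
      (∀ j : Fin n, (H ^ q).mulVec (fun _ => 1) j ≤ (H ^ q).mulVec (fun _ => 1) ⟨0, hn0⟩) ∧
      (∀ j : Fin n, n ≤ j.val + 2 * q * N → (H ^ q).mulVec (fun _ => 1) j = 0) ∧
      (∀ j : Fin n, j.val + 2 * q * N < n → 0 < (H ^ q).mulVec (fun _ => 1) j) ∧
      (H ^ q).mulVec (fun _ => 1) ⟨0, hn0⟩ ≤ C ^ q ∧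
      (1 ≤ q → ∀ j : Fin n, 1 ≤ j.val → j.val + 2 * q * N < n →
        (H ^ q).mulVec (fun _ => 1) j < (H ^ q).mulVec (fun _ => 1) ⟨0, hn0⟩) := by
    intro q
    induction q with
    | zero =>
      simp only [pow_zero, Matrix.one_mulVec]
      refine ⟨fun j => le_refl 1, fun j h => by omega, fun j _ => one_pos,
        by norm_num, fun h => by omega⟩
    | succ q ih =>
      obtain ⟨ih1, ih2, ih3, ih4, ih5⟩ := ih
      have hrel : 2 * (q + 1) * N = 2 * q * N + 2 * N := by ring
      have ihnn : ∀ j : Fin n, 0 ≤ (H ^ q).mulVec (fun _ => 1) j := by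
        intro j
        by_cases h : j.val + 2 * q * N < n
        · exact le_of_lt (ih3 j h)
        · rw [ih2 j (by omega)]
      have hstep : ∀ j : Fin n, (H ^ (q+1)).mulVec (fun _ => 1) j =
          if j.val < n - 2 * N then
            c * ∑ k ∈ Finset.univ.filter (fun k : Fin n => j.val + 2 * N ≤ k.val),
              (H ^ q).mulVec (fun _ => 1) k
          else 0 := by
        intro j
        rw [pow_succ', ← Matrix.mulVec_mulVec, hrow]
      constructor
      · -- (i) every entry ≤ first entry
        intro j
        rw [hstep, hstep]
        by_cases hj : j.val < n - 2 * N
        · have h0 : (0:ℕ) < n - 2 * N := by omega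
          rw [if_pos hj, if_pos h0]
          apply mul_le_mul_of_nonneg_left _ (le_of_lt hc0)
          apply Finset.sum_le_sum_of_subset_of_nonneg
          · intro k hk
            simp only [Finset.mem_filter, Finset.mem_univ, true_and] at hk ⊢
            omega
          · intro k _ _; exact ihnn k
        · rw [if_neg hj]
          by_cases h0 : (0:ℕ) < n - 2 * N
          · rw [if_pos h0]
            apply mul_nonneg (le_of_lt hc0)
            exact Finset.sum_nonneg fun k _ => ihnn k
          · rw [if_neg h0]
      refine ⟨?_, ?_, ?_, ?_⟩
      · -- (ii) zero entries
        intro j hjz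
        rw [hstep]
        by_cases hj : j.val < n - 2 * N
        · rw [if_pos hj]
          have : ∑ k ∈ Finset.univ.filter (fun k : Fin n => j.val + 2 * N ≤ k.val),
              (H ^ q).mulVec (fun _ => 1) k = 0 := by
            apply Finset.sum_eq_zero
            intro k hk
            simp only [Finset.mem_filter, Finset.mem_univ, true_and] at hk
            exact ih2 k (by omega)
          rw [this, mul_zero]
        · rw [if_neg hj]
      · -- (iii) positive entries
        intro j hjp
        rw [hstep, if_pos (by omega)]
        apply mul_pos hc0
        have hkmem : (⟨j.val + 2 * N, by omega⟩ : Fin n) ∈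
            Finset.univ.filter (fun k : Fin n => j.val + 2 * N ≤ k.val) := by
          simp only [Finset.mem_filter, Finset.mem_univ, true_and]
          exact le_refl _
        calc (0:ℝ) < (H ^ q).mulVec (fun _ => 1) ⟨j.val + 2 * N, by omega⟩ :=
              ih3 _ (show j.val + 2 * N + 2 * q * N < n by omega)
          _ ≤ _ := Finset.single_le_sum (fun k _ => ihnn k) hkmem
      · -- (iv) C^q bound
        rw [hstep]
        by_cases h0 : (0:ℕ) < n - 2 * N
        · rw [if_pos h0]
          have hg0 : (0:ℝ) ≤ (H ^ q).mulVec (fun _ => 1) ⟨0, hn0⟩ := ihnn _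
          have hcard : (Finset.univ.filter (fun k : Fin n => 0 + 2 * N ≤ k.val)).card
              ≤ n - 2 * N := by
            have := Finset.card_le_card_of_injOn (fun k : Fin n => k.val - 2 * N)
              (s := Finset.univ.filter (fun k : Fin n => 0 + 2 * N ≤ k.val))
              (t := Finset.range (n - 2 * N))
              (by intro k hk
                  simp only [Finset.mem_coe, Finset.mem_filter, Finset.mem_univ, true_and] at hk
                  simp only [Finset.mem_coe, Finset.mem_range]
                  omega)
              (by intro a ha b hb hab
                  simp only [Finset.mem_coe, Finset.mem_filter, Finset.mem_univ,
                    true_and] at ha hb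
                  have hab' : a.val - 2 * N = b.val - 2 * N := hab
                  have : a.val = b.val := by omega
                  exact Fin.ext this)
            simpa using this
          have hsum : ∑ k ∈ Finset.univ.filter (fun k : Fin n => 0 + 2 * N ≤ k.val),
              (H ^ q).mulVec (fun _ => 1) k
              ≤ ((n - 2 * N : ℕ) : ℝ) * (H ^ q).mulVec (fun _ => 1) ⟨0, hn0⟩ := by
            calc ∑ k ∈ Finset.univ.filter (fun k : Fin n => 0 + 2 * N ≤ k.val),
                (H ^ q).mulVec (fun _ => 1) k
                ≤ ∑ _k ∈ Finset.univ.filter (fun k : Fin n => 0 + 2 * N ≤ k.val),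
                  (H ^ q).mulVec (fun _ => 1) ⟨0, hn0⟩ :=
                  Finset.sum_le_sum (fun k _ => ih1 k)
              _ = ((Finset.univ.filter (fun k : Fin n => 0 + 2 * N ≤ k.val)).card : ℝ)
                  * (H ^ q).mulVec (fun _ => 1) ⟨0, hn0⟩ := by
                  rw [Finset.sum_const, nsmul_eq_mul]
              _ ≤ ((n - 2 * N : ℕ) : ℝ) * (H ^ q).mulVec (fun _ => 1) ⟨0, hn0⟩ := by
                  apply mul_le_mul_of_nonneg_right _ hg0
                  exact_mod_cast hcard
          calc c * ∑ k ∈ Finset.univ.filter (fun k : Fin n => 0 + 2 * N ≤ k.val),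
              (H ^ q).mulVec (fun _ => 1) k
              ≤ c * (((n - 2 * N : ℕ) : ℝ) * (H ^ q).mulVec (fun _ => 1) ⟨0, hn0⟩) :=
                mul_le_mul_of_nonneg_left hsum (le_of_lt hc0)
            _ = (c * ((n - 2 * N : ℕ) : ℝ)) * (H ^ q).mulVec (fun _ => 1) ⟨0, hn0⟩ := by
                ring
            _ ≤ C * C ^ q := by
                apply mul_le_mul hC ih4 (ihnn _) hC0
            _ = C ^ (q + 1) := by rw [pow_succ]; ring
        · rw [if_neg h0]
          positivity
      · -- (v) strict
        intro _ j hj1 hjp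
        rw [hstep, hstep, if_pos (show j.val < n - 2 * N by omega),
          if_pos (show (0:ℕ) < n - 2 * N by omega)]
        apply mul_lt_mul_of_pos_left _ hc0
        have hsub : Finset.univ.filter (fun k : Fin n => j.val + 2 * N ≤ k.val) ⊆
            Finset.univ.filter (fun k : Fin n =>
              (⟨0, hn0⟩ : Fin n).val + 2 * N ≤ k.val) := by
          intro k hk
          simp only [Finset.mem_filter, Finset.mem_univ, true_and] at hk ⊢
          omega
        refine Finset.sum_lt_sum_of_subset hsub
          (i := (⟨2 * N, by omega⟩ : Fin n)) ?_ ?_ ?_ ?_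
        · simp only [Finset.mem_filter, Finset.mem_univ, true_and]
          show (0:ℕ) + 2 * N ≤ 2 * N
          omega
        · simp only [Finset.mem_filter, Finset.mem_univ, true_and]
          show ¬ (j.val + 2 * N ≤ 2 * N)
          omega
        · exact ih3 _ (show 2 * N + 2 * q * N < n by omega)
        · intro k _ _; exact ihnn k
  obtain ⟨k1, k2, k3, k4, k5⟩ := key q
  refine ⟨fun m hm1 hm2 => ⟨k5 hq1 m hm1 (by omega), k3 m (by omega)⟩, k4⟩
end

section
/- Discrete delay Gronwall inequality: let y^n and Φ^n be nonnegative sequences defined for all indices, and suppose y^n ≤ |b|ρ ∑_{k=2N+1}^{n} y^{k-2N} + Φ^n for all n with 2N+1 ≤ n ≤ 2KN, while y^n ≤ Φ^n for 1 ≤ n ≤ 2N (empty sum convention). If Φ is nondecreasing, then there exists a constant C depending only on |b|, the delay τ = 2Nρ, and K (not on ρ or N) such that y^n ≤ C Φ^n for all 1 ≤ n ≤ 2KN. -/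
/-- Discrete delay Gronwall inequality: if nonnegative sequences satisfy
y^n ≤ |b|ρ ∑_{k=2N+1}^{n} y^{k-2N} + Φ^n for 2N+1 ≤ n ≤ 2KN and y^n ≤ Φ^n for
1 ≤ n ≤ 2N, with Φ nondecreasing, then y^n ≤ C Φ^n with a constant C depending
only on |b|, the delay τ = 2Nρ and K (not on ρ or N). -/
theorem discrete_delay_gronwall (b τ : ℝ) (hb : b ≠ 0) (hτ : 0 < τ)
    (K : ℕ) (hK : 1 ≤ K) :
    ∃ C : ℝ, 0 < C ∧
      ∀ (ρ : ℝ) (N : ℕ) (y Φ : ℕ → ℝ),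
        0 < ρ → 2 ≤ N → τ = 2 * N * ρ →
        (∀ n, 0 ≤ y n) → (∀ n, 0 ≤ Φ n) →
        (∀ m n, m ≤ n → Φ m ≤ Φ n) →
        (∀ n, 2 * N + 1 ≤ n → n ≤ 2 * K * N →
          y n ≤ |b| * ρ * ∑ k ∈ Finset.Icc (2 * N + 1) n, y (k - 2 * N) + Φ n) →
        (∀ n, 1 ≤ n → n ≤ 2 * N → y n ≤ Φ n) →
        ∀ n, 1 ≤ n → n ≤ 2 * K * N → y n ≤ C * Φ n := by
  have hb0 : 0 < |b| := abs_pos.mpr hb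
  set B : ℝ := 1 + K * |b| * τ with hB
  have hKτ0 : 0 ≤ (K : ℝ) * |b| * τ := by positivity
  have hB1 : 1 ≤ B := by linarith
  refine ⟨B ^ K, by positivity, ?_⟩
  intro ρ N y Φ hρ hN hτρ hy0 hΦ0 hΦmono hrec hbase
  have key : ∀ j : ℕ, ∀ n, 1 ≤ n → n ≤ 2 * (j + 1) * N → n ≤ 2 * K * N →
      y n ≤ B ^ j * Φ n := by
    intro j
    induction j with
    | zero =>
      intro n h1 h2 _
      simpa using hbase n h1 (by simpa using h2)
    | succ j ih =>
      intro n h1 h2 hK'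
      by_cases hcase : n ≤ 2 * (j + 1) * N
      · have h := ih n h1 hcase hK'
        have hpow : B ^ j ≤ B ^ (j + 1) := pow_le_pow_right₀ hB1 (Nat.le_succ j)
        have := hΦ0 n
        nlinarith [pow_nonneg (le_trans zero_le_one hB1) j]
      · push_neg at hcase
        have h2N : 2 * N ≤ 2 * (j + 1) * N := by
          have : 2 ≤ 2 * (j + 1) := by omega
          exact Nat.mul_le_mul_right N this
        have hn2N : 2 * N + 1 ≤ n := by omega
        have hr := hrec n hn2N hK'
        have hBj1 : (1:ℝ) ≤ B ^ j := one_le_pow₀ hB1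
        have hterm : ∀ k ∈ Finset.Icc (2 * N + 1) n,
            y (k - 2 * N) ≤ B ^ j * Φ n := by
          intro k hk
          rw [Finset.mem_Icc] at hk
          have hm1 : 1 ≤ k - 2 * N := by omega
          have hmK : k - 2 * N ≤ 2 * K * N :=
            le_trans (Nat.sub_le _ _) (le_trans hk.2 hK')
          have hEq : 2 * (j + 1 + 1) * N = 2 * (j + 1) * N + 2 * N := by ring
          have hmj : k - 2 * N ≤ 2 * (j + 1) * N :=
            Nat.sub_le_iff_le_add.mpr (le_trans hk.2 (h2.trans_eq hEq))
          have := ih (k - 2 * N) hm1 hmj hmK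
          calc y (k - 2 * N) ≤ B ^ j * Φ (k - 2 * N) := this
            _ ≤ B ^ j * Φ n := by
                have := hΦmono (k - 2 * N) n (le_trans (Nat.sub_le _ _) hk.2)
                nlinarith
        have hsum : ∑ k ∈ Finset.Icc (2 * N + 1) n, y (k - 2 * N) ≤
            (n - 2 * N : ℕ) * (B ^ j * Φ n) := by
          have := Finset.sum_le_card_nsmul _ _ _ hterm
          simpa [Nat.card_Icc, nsmul_eq_mul, Nat.add_sub_add_right] using this
        have hcard : ((n - 2 * N : ℕ) : ℝ) ≤ 2 * K * N := by
          have : (n - 2 * N : ℕ) ≤ 2 * K * N := le_trans (Nat.sub_le _ _) hK'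
          exact_mod_cast le_trans (Nat.cast_le.mpr this) (by push_cast; ring_nf; exact le_refl _)
        have hρcard : |b| * ρ * ((n - 2 * N : ℕ) : ℝ) ≤ |b| * K * τ := by
          have h1' : |b| * ρ * ((n - 2 * N : ℕ) : ℝ) ≤ |b| * ρ * (2 * K * N) := by
            have := mul_le_mul_of_nonneg_left hcard (by positivity : (0:ℝ) ≤ |b| * ρ)
            linarith
          have h2' : |b| * ρ * (2 * K * N) = |b| * K * τ := by
            rw [hτρ]; ring
          linarith
        have hΦn := hΦ0 n
        have hsumnn : (0:ℝ) ≤ B ^ j * Φ n := by positivity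
        have hmul : |b| * ρ * ∑ k ∈ Finset.Icc (2 * N + 1) n, y (k - 2 * N) ≤
            |b| * K * τ * (B ^ j * Φ n) := by
          have := mul_le_mul_of_nonneg_left hsum (by positivity : (0:ℝ) ≤ |b| * ρ)
          nlinarith
        have hfin : y n ≤ |b| * K * τ * (B ^ j * Φ n) + Φ n := by linarith
        have : |b| * K * τ * (B ^ j * Φ n) + Φ n ≤ B ^ (j + 1) * Φ n := by
          have hBp : B ^ (j + 1) = B ^ j + K * |b| * τ * B ^ j := by
            rw [pow_succ]; ring
          nlinarith
        linarith
  intro n h1 h2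
  have hKe : K - 1 + 1 = K := Nat.succ_pred_eq_of_pos hK
  have h := key (K - 1) n h1 (by rw [hKe]; exact h2) h2
  have hpow : B ^ (K - 1) ≤ B ^ K := pow_le_pow_right₀ hB1 (Nat.sub_le _ _)
  have := hΦ0 n
  nlinarith
end

section
/- Let 0 < α < 1 and τ < t_{2N} < t_{2N+1} < t_n with t_n - t_{2N} ≤ C(t_n - t_{2N+1}). Suppose g : (t_{2N}, t_{2N+1}) → R satisfies |g(s)| ≤ M ρ^α where ρ = t_{2N+1} - t_{2N}. Then |∫_{t_{2N}}^{t_{2N+1}} (t_n - t)^{-α-1} (∫_{t_{2N+1}}^{t} g(s) ds) dt| ≤ C' M ρ^{1+α} (t_n - τ)^{-α}. -/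
open MeasureTheory intervalIntegral Set

/-- If |g(s)| ≤ M ρ^α on (t_{2N}, t_{2N+1}) with ρ = t_{2N+1} - t_{2N}, and the
mesh points satisfy the comparability conditions of the symmetric graded mesh,
then |∫_{t_{2N}}^{t_{2N+1}} (t_n - t)^{-α-1} (∫_{t_{2N+1}}^t g(s) ds) dt|
≤ C' M ρ^{1+α} (t_n - τ)^{-α}. -/
theorem singular_kernel_delay_bound (α C : ℝ)
    (hα0 : 0 < α) (hα1 : α < 1) (hC : 0 < C) :
    ∃ C' : ℝ, 0 < C' ∧
      ∀ (τ M ρ t2N t2N1 tn : ℝ) (g : ℝ → ℝ),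
        0 < τ → 0 < M → 0 < ρ →
        τ < t2N → t2N < t2N1 → t2N1 < tn →
        ρ = t2N1 - t2N →
        tn - t2N ≤ C * (tn - t2N1) →
        tn - τ ≤ C * (tn - t2N1) →
        t2N1 + ρ ≤ tn →
        (∀ s ∈ Set.Ioo t2N t2N1, |g s| ≤ M * ρ ^ α) →
        |∫ t in t2N..t2N1, (tn - t) ^ (-α - 1) * ∫ s in t2N1..t, g s|
          ≤ C' * M * ρ ^ (1 + α) * (tn - τ) ^ (-α) := by
  refine ⟨C ^ α, Real.rpow_pos_of_pos hC α, ?_⟩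
  intro τ M ρ t2N t2N1 tn g hτ hM hρpos hτ2N h2 h3 hρ hc1 hc2 hc3 hg
  have h4 : 0 < tn - t2N1 := by linarith
  have h5 : 0 < tn - τ := by linarith
  have hρle : ρ ≤ tn - t2N1 := by linarith
  set K := (tn - t2N1) ^ (-α - 1) * (M * ρ ^ α * ρ) with hK
  have hKnn : 0 ≤ K := by
    apply mul_nonneg (Real.rpow_nonneg h4.le _)
    positivity
  have hptw : ∀ t ∈ Set.uIoc t2N t2N1,
      ‖(tn - t) ^ (-α - 1) * ∫ s in t2N1..t, g s‖ ≤ K := by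
    intro t ht
    rw [Set.uIoc_of_le h2.le] at ht
    obtain ⟨ht1, ht2⟩ := ht
    have htn : 0 < tn - t := by linarith
    have hinner : ‖∫ s in t2N1..t, g s‖ ≤ M * ρ ^ α * ρ := by
      have hne : ∀ᵐ s : ℝ, s ≠ t2N1 := by
        refine MeasureTheory.ae_iff.mpr ?_
        simpa using MeasureTheory.measure_singleton (μ := (volume : Measure ℝ)) t2N1
      have hb : ∀ᵐ s : ℝ, s ∈ Set.uIoc t2N1 t → ‖g s‖ ≤ M * ρ ^ α := by
        filter_upwards [hne] with s hs hmem
        rw [Set.uIoc_comm, Set.uIoc_of_le ht2] at hmem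
        exact hg s ⟨lt_of_lt_of_le ht1 hmem.1.le, lt_of_le_of_ne hmem.2 hs⟩
      have h := intervalIntegral.norm_integral_le_of_norm_le_const_ae hb
      calc ‖∫ s in t2N1..t, g s‖ ≤ (M * ρ ^ α) * |t - t2N1| := h
        _ ≤ (M * ρ ^ α) * ρ := by
            apply mul_le_mul_of_nonneg_left _ (by positivity)
            rw [abs_sub_comm, abs_of_nonneg (by linarith)]
            linarith
    have hk : (tn - t) ^ (-α - 1) ≤ (tn - t2N1) ^ (-α - 1) :=
      Real.rpow_le_rpow_of_nonpos h4 (by linarith) (by linarith)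
    calc ‖(tn - t) ^ (-α - 1) * ∫ s in t2N1..t, g s‖
        = (tn - t) ^ (-α - 1) * ‖∫ s in t2N1..t, g s‖ := by
          rw [norm_mul, Real.norm_eq_abs, abs_of_nonneg (Real.rpow_nonneg htn.le _)]
      _ ≤ (tn - t2N1) ^ (-α - 1) * (M * ρ ^ α * ρ) :=
          mul_le_mul hk hinner (norm_nonneg _) (Real.rpow_nonneg h4.le _)
  have houter := intervalIntegral.norm_integral_le_of_norm_le_const hptw
  have habs : |t2N1 - t2N| = ρ := by rw [abs_of_pos (by linarith)]; linarith
  rw [Real.norm_eq_abs, habs] at houter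
  refine houter.trans ?_
  -- now prove K * ρ ≤ C ^ α * M * ρ ^ (1 + α) * (tn - τ) ^ (-α)
  have e1 : ρ ^ (1 + α) = ρ * ρ ^ α := by
    rw [Real.rpow_add hρpos, Real.rpow_one]
  have e2 : ρ * (tn - t2N1) ^ (-α - 1) ≤ (tn - t2N1) ^ (-α) := by
    have e : (tn - t2N1) ^ (-α) = (tn - t2N1) * (tn - t2N1) ^ (-α - 1) := by
      have := Real.rpow_add h4 1 (-α - 1)
      rw [Real.rpow_one] at this
      rw [← this]; congr 1; ring
    rw [e]
    exact mul_le_mul_of_nonneg_right hρle (Real.rpow_nonneg h4.le _)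
  have e3 : (tn - t2N1) ^ (-α) ≤ C ^ α * (tn - τ) ^ (-α) := by
    have h6 : (tn - τ) / C ≤ tn - t2N1 := by rw [div_le_iff₀ hC]; linarith
    have h7 := Real.rpow_le_rpow_of_nonpos (div_pos h5 hC) h6 (neg_nonpos.mpr hα0.le)
    refine h7.trans_eq ?_
    rw [Real.div_rpow h5.le hC.le, Real.rpow_neg hC.le, div_inv_eq_mul, mul_comm]
  calc K * ρ = (M * ρ ^ (1 + α)) * (ρ * (tn - t2N1) ^ (-α - 1)) := by
        rw [hK, e1]; ring
    _ ≤ (M * ρ ^ (1 + α)) * (tn - t2N1) ^ (-α) :=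
        mul_le_mul_of_nonneg_left e2 (by positivity)
    _ ≤ (M * ρ ^ (1 + α)) * (C ^ α * (tn - τ) ^ (-α)) :=
        mul_le_mul_of_nonneg_left e3 (by positivity)
    _ = C ^ α * M * ρ ^ (1 + α) * (tn - τ) ^ (-α) := by ring
end

section
/- Coercivity of the L1 operator in norm: for elements u^0, u^1, ..., u^n of a real inner product space and positive strictly decreasing weights a_0 > a_1 > ... > a_{n-1} > 0, the inequality (∑_{k=1}^{n} a_{n-k}(u^k - u^{k-1}), u^n) ≥ (∑_{k=1}^{n} a_{n-k}(‖u^k‖ - ‖u^{k-1}‖)) ‖u^n‖ holds. -/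
lemma l1_coercivity_aux (c b : ℕ → ℝ) :
    ∀ m, 1 ≤ m → 0 < c 1 → (∀ k, 1 ≤ k → k < m → c k ≤ c (k + 1)) →
    (∀ k, k ≤ m → b k ≤ 0) →
    ∑ k ∈ Finset.Icc 1 m, c k * (b k - b (k - 1)) ≥ c m * b m := by
  intro m hm
  induction m, hm using Nat.le_induction with
  | base =>
    intro hc1 _ hb
    simp only [Finset.Icc_self, Finset.sum_singleton]
    have hb0 := hb 0 (by omega)
    nlinarith
  | succ m hm ih =>
    intro hc1 hmono hb
    rw [Finset.sum_Icc_succ_top (by omega)]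
    have h1 := ih hc1 (fun k hk1 hk2 => hmono k hk1 (by omega)) (fun k hk => hb k (by omega))
    have h2 := hmono m hm (by omega)
    have h3 := hb m (by omega)
    have h4 : (m + 1) - 1 = m := by omega
    rw [h4]
    nlinarith

/-- Coercivity of the L1 operator in norm: for elements of a real inner product
space and positive strictly decreasing weights a_0 > a_1 > ... > a_{n-1} > 0,
(∑_{k=1}^n a_{n-k}(u^k - u^{k-1}), u^n) ≥ (∑_{k=1}^n a_{n-k}(‖u^k‖-‖u^{k-1}‖))‖u^n‖. -/
theorem l1_coercivity_norm {H : Type*} [NormedAddCommGroup H] [InnerProductSpace ℝ H]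
    (n : ℕ) (u : ℕ → H) (a : ℕ → ℝ)
    (hpos : ∀ k < n, 0 < a k)
    (hdec : ∀ j k, j < k → k < n → a k < a j) :
    (inner ℝ (∑ k ∈ Finset.Icc 1 n, a (n - k) • (u k - u (k - 1))) (u n) : ℝ) ≥
      (∑ k ∈ Finset.Icc 1 n, a (n - k) * (‖u k‖ - ‖u (k - 1)‖)) * ‖u n‖ := by
  rcases Nat.eq_zero_or_pos n with hn | hn
  · subst hn
    simp
  set c : ℕ → ℝ := fun k => a (n - k) with hc
  set b : ℕ → ℝ := fun k => (inner ℝ (u k) (u n) : ℝ) - ‖u k‖ * ‖u n‖ with hbdef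
  have hc1 : 0 < c 1 := hpos (n - 1) (by omega)
  have hmono : ∀ k, 1 ≤ k → k < n → c k ≤ c (k + 1) := by
    intro k hk1 hk2
    have : n - (k + 1) < n - k := by omega
    exact le_of_lt (hdec (n - (k + 1)) (n - k) this (by omega))
  have hb : ∀ k, k ≤ n → b k ≤ 0 := by
    intro k _
    have := real_inner_le_norm (u k) (u n)
    simp only [hbdef]
    linarith
  have key := l1_coercivity_aux c b n hn hc1 hmono hb
  have hbn : b n = 0 := by
    simp only [hbdef, real_inner_self_eq_norm_mul_norm]
    ring
  rw [hbn, mul_zero] at key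
  have expand : ∑ k ∈ Finset.Icc 1 n, c k * (b k - b (k - 1)) =
      (∑ k ∈ Finset.Icc 1 n, c k * ((inner ℝ (u k) (u n) : ℝ) - inner ℝ (u (k - 1)) (u n))) -
      (∑ k ∈ Finset.Icc 1 n, c k * (‖u k‖ - ‖u (k - 1)‖)) * ‖u n‖ := by
    rw [Finset.sum_mul, ← Finset.sum_sub_distrib]
    apply Finset.sum_congr rfl
    intro k _
    simp only [hbdef]
    ring
  rw [expand] at key
  rw [sum_inner]
  simp only [real_inner_smul_left, inner_sub_left]
  linarith
end
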